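/- For every s ∈ (0, sup f), every nonempty connected component of the upper level set U_s = {x : f(x) ≥ s} contains at least one mode of f. Moreover, if x⋆ is a mode of f, then the intersection over all s ∈ (0, f(x⋆)] of the connected component of U_s containing x⋆ equals the singleton {x⋆}. -/

import Mathlib

open Metric Set Filter MeasureTheory Topology
open scoped Topology RealInnerProductSpace

abbrev Euc (d : ℕ) := EuclideanSpace ℝ (Fin d)

/-- The Hessian of `f`, as the derivative of the gradient field. -/
noncomputable def hess {d : ℕ} (f : Euc d → ℝ) (x : Euc d) : Euc d →L[ℝ] Euc d :=
  fderiv ℝ (gradient f) x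

/-- The standing assumptions on the density `f`: nonnegative, integrable, vanishing at
infinity, twice differentiable with bounded and uniformly continuous zeroth, first and
second derivatives, and Morse (nonsingular Hessian at every critical point). -/
def IsNiceDensity {d : ℕ} (f : Euc d → ℝ) : Prop :=
  (∀ x, 0 ≤ f x) ∧
  Integrable f volume ∧
  Tendsto f (cocompact (Euc d)) (𝓝 0) ∧
  Differentiable ℝ f ∧
  Differentiable ℝ (gradient f) ∧
  (∃ M, ∀ x, |f x| ≤ M) ∧
  (∃ M, ∀ x, ‖gradient f x‖ ≤ M) ∧
  (∃ M, ∀ x, ‖hess f x‖ ≤ M) ∧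
  UniformContinuous f ∧
  UniformContinuous (gradient f) ∧
  UniformContinuous (hess f) ∧
  (∀ x, gradient f x = 0 → Function.Bijective (hess f x))

/-- `γ` is the gradient ascent curve of `f` starting at `x`, defined on `[0, ∞)`. -/
def IsGradFlow {d : ℕ} (f : Euc d → ℝ) (x : Euc d) (γ : ℝ → Euc d) : Prop :=
  γ 0 = x ∧ ∀ t ∈ Ici (0:ℝ), HasDerivWithinAt γ (gradient f (γ t)) (Ici 0) t

section Aux
variable {d : ℕ} {f : Euc d → ℝ}

lemma aux_fderiv (hdf : Differentiable ℝ f) (y : Euc d) :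
    HasFDerivAt f (innerSL ℝ (gradient f y)) y := by
  have h := (hdf y).hasGradientAt
  rw [hasGradientAt_iff_hasFDerivAt] at h
  have e : (innerSL ℝ (gradient f y)) = InnerProductSpace.toDual ℝ _ (gradient f y) := by
    ext z; simp
  rw [e]; exact h

lemma aux_line (hdf : Differentiable ℝ f) (m v : Euc d) (t : ℝ) :
    HasDerivAt (fun t : ℝ => f (m + t • v)) ⟪gradient f (m + t • v), v⟫ t := by
  have hline : HasDerivAt (fun t : ℝ => m + t • v) v t := by
    simpa using ((hasDerivAt_id t).smul_const v).const_add m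
  have := (aux_fderiv hdf (m + t • v)).comp_hasDerivAt t hline
  exact this

lemma aux_symm (hdf : Differentiable ℝ f) (hdg : Differentiable ℝ (gradient f))
    (m : Euc d) (v w : Euc d) : ⟪hess f m v, w⟫ = ⟪hess f m w, v⟫ := by
  have hH : HasFDerivAt (gradient f) (hess f m) m := (hdg m).hasFDerivAt
  have h2 : HasFDerivAt (fun y => innerSL ℝ (gradient f y))
      ((innerSL ℝ (E := Euc d)).comp (hess f m)) m :=
    (innerSL ℝ (E := Euc d)).hasFDerivAt.comp m hH
  have := second_derivative_symmetric (aux_fderiv hdf) h2 v w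
  simpa using this

lemma aux_grad_est (hdg : Differentiable ℝ (gradient f)) {m : Euc d}
    (grad0 : gradient f m = 0) {ε : ℝ} (hε : 0 < ε) :
    ∃ δ > 0, ∀ w : Euc d, ‖w‖ ≤ δ → ‖gradient f (m + w) - hess f m w‖ ≤ ε * ‖w‖ := by
  have hH : HasFDerivAt (gradient f) (hess f m) m := (hdg m).hasFDerivAt
  rw [hasFDerivAt_iff_isLittleO_nhds_zero] at hH
  have h := hH.def hε
  rcases Metric.eventually_nhds_iff.1 h with ⟨δ, hδ, hball⟩
  refine ⟨δ/2, by positivity, fun w hw => ?_⟩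
  have : dist w 0 < δ := by
    simp only [dist_zero_right]; linarith
  have := hball this
  simpa [grad0] using this

lemma aux_mono (hdf : Differentiable ℝ f) {m v : Euc d} {δ : ℝ} (hδ : 0 < δ)
    (hpos : ∀ t ∈ Ioc (0:ℝ) δ, 0 < ⟪gradient f (m + t • v), v⟫) :
    ∀ t ∈ Ioc (0:ℝ) δ, f m < f (m + t • v) := by
  have hsm : StrictMonoOn (fun t : ℝ => f (m + t • v)) (Icc 0 δ) := by
    apply strictMonoOn_of_deriv_pos (convex_Icc 0 δ)
    · exact (hdf.continuous.comp (by continuity)).continuousOn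
    · intro t ht
      rw [interior_Icc] at ht
      rw [(aux_line hdf m v t).deriv]
      exact hpos t ⟨ht.1, le_of_lt ht.2⟩
  intro t ht
  have := hsm ⟨le_refl 0, le_of_lt hδ⟩ ⟨le_of_lt ht.1, ht.2⟩ ht.1
  simpa using this

lemma aux_anti (hdf : Differentiable ℝ f) {m v : Euc d} {δ : ℝ} (hδ : 0 < δ)
    (hneg : ∀ t ∈ Ioc (0:ℝ) δ, ⟪gradient f (m + t • v), v⟫ < 0) :
    ∀ t ∈ Ioc (0:ℝ) δ, f (m + t • v) < f m := by
  have hsm : StrictAntiOn (fun t : ℝ => f (m + t • v)) (Icc 0 δ) := by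
    apply strictAntiOn_of_deriv_neg (convex_Icc 0 δ)
    · exact (hdf.continuous.comp (by continuity)).continuousOn
    · intro t ht
      rw [interior_Icc] at ht
      rw [(aux_line hdf m v t).deriv]
      exact hneg t ⟨ht.1, le_of_lt ht.2⟩
  intro t ht
  have := hsm ⟨le_refl 0, le_of_lt hδ⟩ ⟨le_of_lt ht.1, ht.2⟩ ht.1
  simpa using this

lemma aux_negdef (hd : 0 < d) (H : Euc d →L[ℝ] Euc d)
    (hsymm : ∀ v w : Euc d, ⟪H v, w⟫ = ⟪H w, v⟫)
    (hinj : Function.Injective H)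
    (hsemi : ∀ v : Euc d, ⟪H v, v⟫ ≤ 0) :
    ∃ μ > 0, ∀ v : Euc d, ⟪H v, v⟫ ≤ -μ * ‖v‖^2 := by
  have expand : ∀ (t : ℝ) (v w : Euc d), ⟪H (v + t • w), v + t • w⟫ =
      ⟪H v, v⟫ + t * ⟪H v, w⟫ + t * ⟪H w, v⟫ + t^2 * ⟪H w, w⟫ := by
    intro t v w
    rw [map_add, ContinuousLinearMap.map_smul, inner_add_left, inner_add_right,
      inner_add_right, real_inner_smul_left, real_inner_smul_left,
      real_inner_smul_right, real_inner_smul_right]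
    ring
  have homog : ∀ (a : ℝ) (v : Euc d), ⟪H (a • v), a • v⟫ = a^2 * ⟪H v, v⟫ := by
    intro a v
    rw [ContinuousLinearMap.map_smul, real_inner_smul_left, real_inner_smul_right]
    ring
  have hcs : IsCompact (sphere (0 : Euc d) 1) := isCompact_sphere 0 1
  have hne : (sphere (0 : Euc d) 1).Nonempty := by
    refine ⟨EuclideanSpace.single ⟨0, hd⟩ (1:ℝ), ?_⟩
    simp [EuclideanSpace.norm_single]
  have hcont : Continuous fun v : Euc d => ⟪H v, v⟫ :=
    continuous_inner.comp (H.continuous.prodMk continuous_id)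
  obtain ⟨v0, hv0, hmax'⟩ := hcs.exists_isMaxOn hne hcont.continuousOn
  have hmax : ∀ w ∈ sphere (0 : Euc d) 1, ⟪H w, w⟫ ≤ ⟪H v0, v0⟫ := fun w hw => hmax' hw
  have hv0n : ‖v0‖ = 1 := mem_sphere_zero_iff_norm.1 hv0
  have hcneg : ⟪H v0, v0⟫ < 0 := by
    rcases lt_or_eq_of_le (hsemi v0) with h | h
    · exact h
    exfalso
    have hB : ∀ w : Euc d, ⟪H v0, w⟫ = 0 := by
      intro w
      by_contra hb
      have hsym' : ⟪H w, v0⟫ = ⟪H v0, w⟫ := (hsymm v0 w).symm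
      have hcw0 : ⟪H w, w⟫ ≤ 0 := hsemi w
      have hden : (0:ℝ) < 1 - ⟪H w, w⟫ := by linarith
      have hle := hsemi (v0 + (⟪H v0, w⟫ / (1 - ⟪H w, w⟫)) • w)
      rw [expand, hsym', ← h] at hle
      have hb2 : 0 < ⟪H v0, w⟫^2 := by positivity
      set b := ⟪H v0, w⟫
      set cw := ⟪H w, w⟫
      have hID : b/(1-cw)*b + b/(1-cw)*b + (b/(1-cw))^2*cw = b^2*(2 - cw)/(1-cw)^2 := by
        field_simp; ring
      have hle2 : b^2*(2-cw)/(1-cw)^2 ≤ 0 := by linarith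
      have h4 : b^2*(2-cw) = (b^2*(2-cw)/(1-cw)^2) * (1-cw)^2 := by field_simp
      have hkey : b^2 * (2 - cw) ≤ 0 := by
        rw [h4]; exact mul_nonpos_of_nonpos_of_nonneg hle2 (sq_nonneg _)
      nlinarith
    have h0 : H v0 = 0 := by
      have := hB (H v0)
      rwa [real_inner_self_eq_norm_sq, pow_eq_zero_iff (by norm_num), norm_eq_zero] at this
    have : v0 = 0 := hinj (by rw [h0, map_zero])
    rw [this] at hv0n; simp at hv0n
  refine ⟨-⟪H v0, v0⟫, by linarith, fun v => ?_⟩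
  rcases eq_or_ne v 0 with rfl | hv
  · simp
  · have hvn : ‖v‖ ≠ 0 := norm_ne_zero_iff.2 hv
    have hu : (‖v‖⁻¹ • v) ∈ sphere (0 : Euc d) 1 := by
      simp [norm_smul, inv_mul_cancel₀ hvn]
    have h1 := hmax _ hu
    rw [homog] at h1
    have hv2 : (0:ℝ) < ‖v‖^2 := by positivity
    have h3 : (‖v‖⁻¹)^2 = (‖v‖^2)⁻¹ := by
      rw [← inv_pow]
    rw [h3] at h1
    have := (inv_mul_le_iff₀ hv2).1 h1
    nlinarith [this]

lemma aux_strict_max (hdf : Differentiable ℝ f) (hdg : Differentiable ℝ (gradient f))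
    {m : Euc d} (grad0 : gradient f m = 0) {μ : ℝ} (hμ : 0 < μ)
    (hneg : ∀ v : Euc d, ⟪hess f m v, v⟫ ≤ -μ * ‖v‖^2) :
    ∃ δ > 0, ∀ y : Euc d, dist y m ≤ δ → y ≠ m → f y < f m := by
  obtain ⟨δ, hδ, hest⟩ := aux_grad_est hdg grad0 (half_pos hμ)
  refine ⟨δ, hδ, fun y hy hym => ?_⟩
  set v := y - m with hv
  have hvne : v ≠ 0 := sub_ne_zero.2 hym
  have hvnorm : ‖v‖ ≤ δ := by rwa [hv, ← dist_eq_norm]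
  have hvpos : 0 < ‖v‖ := norm_pos_iff.2 hvne
  have hkey : ∀ t ∈ Ioc (0:ℝ) 1, ⟪gradient f (m + t • v), v⟫ < 0 := by
    intro t ht
    have htv : ‖t • v‖ ≤ δ := by
      rw [norm_smul, Real.norm_eq_abs, abs_of_pos ht.1]
      calc t * ‖v‖ ≤ 1 * ‖v‖ := by nlinarith [ht.2, hvpos]
        _ ≤ δ := by linarith
    have hr := hest (t • v) htv
    have hsplit : ⟪gradient f (m + t • v), v⟫ =
        ⟪gradient f (m + t • v) - hess f m (t • v), v⟫ + ⟪hess f m (t • v), v⟫ := by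
      rw [inner_sub_left]; ring
    have h1 : ⟪gradient f (m + t • v) - hess f m (t • v), v⟫ ≤ μ/2 * ‖t • v‖ * ‖v‖ := by
      calc ⟪gradient f (m + t • v) - hess f m (t • v), v⟫
          ≤ ‖gradient f (m + t • v) - hess f m (t • v)‖ * ‖v‖ := real_inner_le_norm _ _
        _ ≤ μ/2 * ‖t • v‖ * ‖v‖ := by
            apply mul_le_mul_of_nonneg_right hr (norm_nonneg v)
    have h2 : ⟪hess f m (t • v), v⟫ = t * ⟪hess f m v, v⟫ := by
      rw [ContinuousLinearMap.map_smul, real_inner_smul_left]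
    have h3 : t * ⟪hess f m v, v⟫ ≤ t * (-μ * ‖v‖^2) :=
      mul_le_mul_of_nonneg_left (hneg v) (le_of_lt ht.1)
    have h4 : ‖t • v‖ = t * ‖v‖ := by
      rw [norm_smul, Real.norm_eq_abs, abs_of_pos ht.1]
    rw [hsplit, h2]
    rw [h4] at h1
    have h5 : ‖v‖^2 = ‖v‖*‖v‖ := sq ‖v‖
    nlinarith [h1, h3, h5, mul_pos (mul_pos (half_pos hμ) ht.1) (mul_pos hvpos hvpos)]
  have := aux_anti hdf one_pos hkey 1 ⟨one_pos, le_refl 1⟩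
  simpa [hv] using this

lemma aux_localmax_grad0 {m : Euc d} (hmax : IsLocalMax f m) : gradient f m = 0 := by
  have := hmax.fderiv_eq_zero
  rw [gradient, this, map_zero]

lemma aux_pos_dir (hdg : Differentiable ℝ (gradient f))
    {m v : Euc d} (grad0 : gradient f m = 0) (hQ : 0 < ⟪hess f m v, v⟫) :
    ∃ δ > 0, ∀ t ∈ Ioc (0:ℝ) δ, 0 < ⟪gradient f (m + t • v), v⟫ := by
  have hvne : v ≠ 0 := by
    rintro rfl; simp at hQ
  have hvpos : 0 < ‖v‖ := norm_pos_iff.2 hvne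
  have hε : 0 < ⟪hess f m v, v⟫ / (2 * ‖v‖^2) := by positivity
  obtain ⟨δ₀, hδ₀, hest⟩ := aux_grad_est hdg grad0 hε
  refine ⟨δ₀ / ‖v‖, by positivity, ?_⟩
  intro t ht
  have htv : ‖t • v‖ ≤ δ₀ := by
    rw [norm_smul, Real.norm_eq_abs, abs_of_pos ht.1]
    calc t * ‖v‖ ≤ (δ₀ / ‖v‖) * ‖v‖ := mul_le_mul_of_nonneg_right ht.2 (norm_nonneg v)
      _ = δ₀ := by field_simp
  have hr := hest (t • v) htv
  have hsplit : ⟪gradient f (m + t • v), v⟫ =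
      ⟪gradient f (m + t • v) - hess f m (t • v), v⟫ + ⟪hess f m (t • v), v⟫ := by
    rw [inner_sub_left]; ring
  have h1 : |⟪gradient f (m + t • v) - hess f m (t • v), v⟫| ≤
      ⟪hess f m v, v⟫ / (2 * ‖v‖^2) * ‖t • v‖ * ‖v‖ := by
    calc |⟪gradient f (m + t • v) - hess f m (t • v), v⟫|
        ≤ ‖gradient f (m + t • v) - hess f m (t • v)‖ * ‖v‖ := abs_real_inner_le_norm _ _
      _ ≤ _ := mul_le_mul_of_nonneg_right hr (norm_nonneg v)
  have h2 : ⟪hess f m (t • v), v⟫ = t * ⟪hess f m v, v⟫ := by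
    rw [ContinuousLinearMap.map_smul, real_inner_smul_left]
  have h4 : ‖t • v‖ = t * ‖v‖ := by
    rw [norm_smul, Real.norm_eq_abs, abs_of_pos ht.1]
  rw [hsplit, h2]
  rw [h4] at h1
  have h6 : ⟪hess f m v, v⟫ / (2 * ‖v‖^2) * (t * ‖v‖) * ‖v‖ = t * ⟪hess f m v, v⟫ / 2 := by
    field_simp
  rw [h6] at h1
  have h7 := abs_le.1 h1
  nlinarith [mul_pos ht.1 hQ, h7.1]

lemma aux_localmax_semidef (hdf : Differentiable ℝ f) (hdg : Differentiable ℝ (gradient f))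
    {m : Euc d} (hmax : IsLocalMax f m) :
    ∀ v : Euc d, ⟪hess f m v, v⟫ ≤ 0 := by
  intro v
  by_contra hQ
  push_neg at hQ
  have grad0 : gradient f m = 0 := aux_localmax_grad0 hmax
  obtain ⟨δ, hδ, hkey⟩ := aux_pos_dir hdg grad0 hQ
  have htend : Tendsto (fun t : ℝ => m + t • v) (𝓝[>] 0) (𝓝 m) := by
    have hc : Continuous (fun t : ℝ => m + t • v) := by continuity
    have := hc.tendsto 0
    simp only [zero_smul, add_zero] at this
    exact this.mono_left nhdsWithin_le_nhds
  have hev1 : ∀ᶠ t in 𝓝[>] (0:ℝ), f (m + t • v) ≤ f m := htend.eventually hmax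
  have hev2 : ∀ᶠ t in 𝓝[>] (0:ℝ), t ∈ Ioc (0:ℝ) δ :=
    Ioc_mem_nhdsGT_of_mem ⟨le_refl 0, hδ⟩
  obtain ⟨t, h1, h2⟩ := (hev1.and hev2).exists
  exact absurd (aux_mono hdf hδ hkey t h2) (not_lt.2 h1)

lemma aux_mode_strict (hd : 0 < d) (hdf : Differentiable ℝ f)
    (hdg : Differentiable ℝ (gradient f))
    (morse : ∀ x : Euc d, gradient f x = 0 → Function.Bijective (hess f x))
    {m : Euc d} (hmax : IsLocalMax f m) :
    ∃ δ > 0, ∀ y : Euc d, dist y m ≤ δ → y ≠ m → f y < f m := by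
  have grad0 := aux_localmax_grad0 hmax
  have hsemi := aux_localmax_semidef hdf hdg hmax
  obtain ⟨μ, hμ, hneg⟩ := aux_negdef hd (hess f m) (fun v w => aux_symm hdf hdg m v w)
    (morse m grad0).injective hsemi
  exact aux_strict_max hdf hdg grad0 hμ hneg

end Aux

/-- Every nonempty connected component of an upper level set `{f ≥ s}`
(for `0 < s < sup f`) contains a mode, and a mode is the intersection of all the level
clusters containing it. -/
theorem level_cluster_contains_mode_and_mode_is_intersection
    {d : ℕ} (hd : 0 < d) (f : Euc d → ℝ) (hf : IsNiceDensity f) :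
    (∀ s ∈ Ioo (0:ℝ) (⨆ x, f x), ∀ x : Euc d, s ≤ f x →
      ∃ m ∈ connectedComponentIn {y : Euc d | s ≤ f y} x, IsLocalMax f m) ∧
    (∀ xstar : Euc d, IsLocalMax f xstar →
      ⋂ s ∈ Ioc (0:ℝ) (f xstar), connectedComponentIn {y : Euc d | s ≤ f y} xstar
        = {xstar}) := by
  obtain ⟨h0, -, h3, hdf, hdg, -, -, -, -, -, -, morse⟩ := hf
  constructor
  · -- Part 1
    intro s hs x hx
    have hU_closed : IsClosed {y : Euc d | s ≤ f y} :=
      isClosed_le continuous_const hdf.continuous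
    have hev : {y : Euc d | f y < s} ∈ cocompact (Euc d) := h3 (Iio_mem_nhds hs.1)
    obtain ⟨K, hK, hKc⟩ := mem_cocompact.1 hev
    have hUK : {y : Euc d | s ≤ f y} ⊆ K := by
      intro y hy
      by_contra hyK
      have h1 : f y < s := hKc hyK
      exact absurd h1 (not_lt.2 hy)
    have hUcomp : IsCompact {y : Euc d | s ≤ f y} := hK.of_isClosed_subset hU_closed hUK
    have hxU : x ∈ {y : Euc d | s ≤ f y} := hx
    set C := connectedComponentIn {y : Euc d | s ≤ f y} x with hCdef
    have hxC : x ∈ C := mem_connectedComponentIn hxU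
    have hCU : C ⊆ {y : Euc d | s ≤ f y} := connectedComponentIn_subset _ _
    have hCclosed : IsClosed C := by
      have h1 : closure C ⊆ {y : Euc d | s ≤ f y} := closure_minimal hCU hU_closed
      have h2 : closure C ⊆ C := IsPreconnected.subset_connectedComponentIn
        isPreconnected_connectedComponentIn.closure (subset_closure hxC) h1
      exact isClosed_of_closure_subset h2
    have hCcomp : IsCompact C := hUcomp.of_isClosed_subset hCclosed hCU
    obtain ⟨m, hmC, hm'⟩ := hCcomp.exists_isMaxOn ⟨x, hxC⟩ hdf.continuous.continuousOn
    have hm : ∀ y ∈ C, f y ≤ f m := fun y hy => hm' hy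
    have hmU : s ≤ f m := hCU hmC
    have key : ∀ (v : Euc d) (δ : ℝ), 0 < δ →
        (∀ t ∈ Ioc (0:ℝ) δ, 0 < ⟪gradient f (m + t • v), v⟫) → False := by
      intro v δ hδ hpos
      have hmono := aux_mono hdf hδ hpos
      have hsegU : (fun t : ℝ => m + t • v) '' Icc 0 δ ⊆ {y : Euc d | s ≤ f y} := by
        rintro _ ⟨t, ht, rfl⟩
        rcases eq_or_lt_of_le ht.1 with rfl | htpos
        · simpa using hmU
        · exact le_trans hmU (hmono t ⟨htpos, ht.2⟩).le
      have hlin : Continuous fun t : ℝ => m + t • v :=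
        continuous_const.add (continuous_id.smul continuous_const)
      have hsegconn : IsPreconnected ((fun t : ℝ => m + t • v) '' Icc 0 δ) :=
        isPreconnected_Icc.image _ hlin.continuousOn
      have hmseg : m ∈ (fun t : ℝ => m + t • v) '' Icc 0 δ :=
        ⟨0, ⟨le_refl 0, hδ.le⟩, by simp⟩
      have hunion : IsPreconnected (C ∪ (fun t : ℝ => m + t • v) '' Icc 0 δ) :=
        IsPreconnected.union m hmC hmseg isPreconnected_connectedComponentIn hsegconn
      have hsub : C ∪ (fun t : ℝ => m + t • v) '' Icc 0 δ ⊆ C :=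
        hunion.subset_connectedComponentIn (Or.inl hxC) (union_subset hCU hsegU)
      have hend : m + δ • v ∈ C := hsub (Or.inr ⟨δ, ⟨hδ.le, le_refl δ⟩, rfl⟩)
      have := hmono δ ⟨hδ, le_refl δ⟩
      linarith [hm _ hend]
    have grad0 : gradient f m = 0 := by
      by_contra hg
      have hcont : Continuous fun t : ℝ => ⟪gradient f (m + t • gradient f m), gradient f m⟫ :=
        (hdg.continuous.comp (continuous_const.add
          (continuous_id.smul continuous_const))).inner continuous_const
      have hvp : 0 < ‖gradient f m‖ := norm_pos_iff.2 hg
      have h0' : 0 < ⟪gradient f (m + (0:ℝ) • gradient f m), gradient f m⟫ := by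
        simp only [zero_smul, add_zero, real_inner_self_eq_norm_sq]
        exact pow_pos hvp 2
      have hopen : {t : ℝ | 0 < ⟪gradient f (m + t • gradient f m), gradient f m⟫} ∈ 𝓝 (0:ℝ) :=
        (isOpen_lt continuous_const hcont).mem_nhds h0'
      obtain ⟨ε, hε, hball⟩ := Metric.mem_nhds_iff.1 hopen
      refine key (gradient f m) (ε/2) (half_pos hε) ?_
      intro t ht
      exact hball (mem_ball.2 (by rw [Real.dist_eq, sub_zero, abs_of_pos ht.1]; linarith [ht.2]))
    have semidef : ∀ v : Euc d, ⟪hess f m v, v⟫ ≤ 0 := by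
      intro v
      by_contra hQ
      push_neg at hQ
      obtain ⟨δ, hδ, hpos⟩ := aux_pos_dir hdg grad0 hQ
      exact key v δ hδ hpos
    obtain ⟨μ, hμ, hneg⟩ := aux_negdef hd _ (fun v w => aux_symm hdf hdg m v w)
      (morse m grad0).injective semidef
    obtain ⟨δ, hδ, hstrict⟩ := aux_strict_max hdf hdg grad0 hμ hneg
    refine ⟨m, hmC, ?_⟩
    filter_upwards [Metric.ball_mem_nhds m hδ] with y hy
    rcases eq_or_ne y m with rfl | hne
    · exact le_refl _
    · exact (hstrict y (mem_ball.1 hy).le hne).le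
  · -- Part 2
    intro xstar hmax
    obtain ⟨δ, hδ, hstrict⟩ := aux_mode_strict hd hdf hdg morse hmax
    have hfpos : 0 < f xstar := by
      set y := xstar + EuclideanSpace.single (⟨0, hd⟩ : Fin d) δ with hy
      have hdist : dist y xstar ≤ δ := by
        rw [hy, dist_eq_norm, add_sub_cancel_left, EuclideanSpace.norm_single,
          Real.norm_eq_abs, abs_of_pos hδ]
      have hne : y ≠ xstar := by
        rw [hy]
        intro h
        have : EuclideanSpace.single (⟨0, hd⟩ : Fin d) δ = 0 := by
          have := congrArg (fun z => z - xstar) h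
          simpa [add_sub_cancel_left] using this
        have := congrArg (fun z : Euc d => z ⟨0, hd⟩) this
        simp [EuclideanSpace.single_apply] at this
        exact absurd this (ne_of_gt hδ)
      have := hstrict y hdist hne
      have := h0 y
      linarith
    have hsingle : connectedComponentIn {y : Euc d | f xstar ≤ f y} xstar = {xstar} := by
      set C := connectedComponentIn {y : Euc d | f xstar ≤ f y} xstar with hCdef
      have hxC : xstar ∈ C := mem_connectedComponentIn (by simp : xstar ∈ {y : Euc d | f xstar ≤ f y})
      have hCU : C ⊆ {y : Euc d | f xstar ≤ f y} := connectedComponentIn_subset _ _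
      have hCu : ∀ y ∈ C, dist y xstar < δ → y = xstar := by
        intro y hy hlt
        by_contra hne
        exact absurd (hstrict y hlt.le hne) (not_lt.2 (hCU hy))
      apply Subset.antisymm
      · intro z hzC
        rw [mem_singleton_iff]
        by_contra hzne
        have hz : ¬ dist z xstar < δ := fun h => hzne (hCu z hzC h)
        have hpre : IsPreconnected C := isPreconnected_connectedComponentIn
        have hcover : C ⊆ ball xstar δ ∪ (closedBall xstar (δ/2))ᶜ := by
          intro y _
          by_cases hyd : dist y xstar ≤ δ/2
          · exact Or.inl (mem_ball.2 (by linarith))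
          · exact Or.inr (by simpa [mem_closedBall] using hyd)
        obtain ⟨w, hwC, hwu, hwv⟩ := hpre (ball xstar δ) ((closedBall xstar (δ/2))ᶜ)
          isOpen_ball isClosed_closedBall.isOpen_compl hcover
          ⟨xstar, hxC, mem_ball_self hδ⟩
          ⟨z, hzC, by simpa [mem_closedBall] using (by linarith [not_lt.1 hz] : ¬ dist z xstar ≤ δ/2)⟩
        have hwx : w = xstar := hCu w hwC (mem_ball.1 hwu)
        rw [hwx] at hwv
        exact hwv (mem_closedBall_self (by positivity))
      · intro z hz
        rw [mem_singleton_iff] at hz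
        rw [hz]
        exact hxC
    apply Subset.antisymm
    · intro y hy
      simp only [mem_iInter] at hy
      have := hy (f xstar) ⟨hfpos, le_refl _⟩
      rwa [hsingle] at this
    · intro y hy
      rw [mem_singleton_iff] at hy
      subst hy
      simp only [mem_iInter]
      intro s hs
      exact mem_connectedComponentIn (by exact hs.2 : y ∈ {z : Euc d | s ≤ f z})
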